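/- Let k ≥ 2 be an integer, m a nonnegative integer, and define F_k(m; x) = ((2m + k − 1)! / (m! · (2m + k − 1)! · (k/2)_m)) · (k/(2(k − 1)))^m · (e₂(x))^m e^{−e₁(x)} for x ∈ ℝ^k, i.e., F_k(m; x) = (1/(m! · (k/2)_m)) · (k/(2(k − 1)))^m · (e₂(x))^m e^{−e₁(x)}. For 1 ≤ i ≤ k write x̂_i for the (k−1)-tuple obtained from x by deleting x_i, and define R(u; v₁, …, v_{k−1}) = (((k − 1)(m + 1) + e₁(v₁, …, v_{k−1})) u + e₂(v₁, …, v_{k−1})) / ((k − 1)(m + 1)(2m + k)). Then for every x ∈ (0, ∞)^k, the identity F_k(m + 1; x) − F_k(m; x) = − Σ_{i=1}^k ∂/∂x_i [ R(x_i; x̂_i) · F_k(m; x) ] holds, where ∂/∂x_i denotes the partial derivative with respect to the i-th coordinate. -/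

import Mathlib

open MeasureTheory Finset

/-- `e₁(x) = ∑ᵢ xᵢ` -/
noncomputable def e1 {k : ℕ} (x : Fin k → ℝ) : ℝ := ∑ i, x i

/-- `e₂(x) = ∑_{i<j} xᵢ xⱼ` -/
noncomputable def e2 {k : ℕ} (x : Fin k → ℝ) : ℝ := ∑ i, ∑ j ∈ Finset.Ioi i, x i * x j

/-- Pochhammer symbol `(y)ₘ = ∏_{i=0}^{m-1} (y + i)` -/
noncomputable def poch (y : ℝ) (m : ℕ) : ℝ := ∏ i ∈ Finset.range m, (y + i)

/-- The WZ integrand `F_k(m; x) = F_k(m, 0; x)` of the paper. -/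
noncomputable def F (k m : ℕ) (x : Fin k → ℝ) : ℝ :=
  ((2 * m + k - 1).factorial : ℝ) /
      ((m.factorial : ℝ) * ((2 * m + k - 1).factorial : ℝ) * poch ((k : ℝ) / 2) m) *
    ((k : ℝ) / (2 * ((k : ℝ) - 1))) ^ m * e2 x ^ m * Real.exp (-(e1 x))

lemma sq_e1 {k : ℕ} (x : Fin k → ℝ) : e1 x ^ 2 = ∑ i, x i ^ 2 + 2 * e2 x := by
  have h := Finset.sum_sum_Ioi_add_eq_sum_sum_off_diag (fun i j : Fin k => x i * x j)
  beta_reduce at h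
  have hL : ∑ i : Fin k, ∑ j ∈ Finset.Ioi i, (x j * x i + x i * x j) = 2 * e2 x := by
    rw [e2, Finset.mul_sum]
    refine Finset.sum_congr rfl fun i _ => ?_
    rw [Finset.mul_sum]
    exact Finset.sum_congr rfl fun j _ => by ring
  rw [hL] at h
  have h' : 2 * e2 x = ∑ i : Fin k, ∑ j ∈ ({i}ᶜ : Finset (Fin k)), x j * x i := by
    rw [h]
  have key : ∑ i : Fin k, ∑ j ∈ ({i}ᶜ : Finset (Fin k)), x j * x i
      = ∑ i : Fin k, (e1 x * x i - x i * x i) := by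
    refine Finset.sum_congr rfl fun i _ => ?_
    have hi := Finset.sum_compl_add_sum ({i} : Finset (Fin k)) (fun j => x j * x i)
    simp only [Finset.sum_singleton] at hi
    have h3 : (∑ j : Fin k, x j * x i) = e1 x * x i := by
      rw [e1, Finset.sum_mul]
    rw [h3] at hi
    linarith
  rw [key] at h'
  have hR : ∑ i : Fin k, (e1 x * x i - x i * x i)
      = e1 x ^ 2 - ∑ i : Fin k, x i ^ 2 := by
    rw [Finset.sum_sub_distrib, ← Finset.mul_sum,
      show (∑ i : Fin k, x i) = e1 x from rfl]
    have : ∑ i : Fin k, x i * x i = ∑ i : Fin k, x i ^ 2 :=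
      Finset.sum_congr rfl fun i _ => (sq (x i)).symm
    rw [this]; ring
  rw [hR] at h'
  linarith

lemma e1_update {k : ℕ} (x : Fin k → ℝ) (i : Fin k) (t : ℝ) :
    e1 (Function.update x i t) = e1 x - x i + t := by
  rw [e1, Finset.sum_update_of_mem (Finset.mem_univ i), e1,
    Finset.sum_sdiff_eq_sub (Finset.subset_univ _), Finset.sum_singleton]
  ring

lemma sum_sq_update {k : ℕ} (x : Fin k → ℝ) (i : Fin k) (t : ℝ) :
    ∑ j, (Function.update x i t j) ^ 2 = ∑ j, x j ^ 2 - x i ^ 2 + t ^ 2 := by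
  have hf : ∀ j, (Function.update x i t j) ^ 2
      = Function.update (fun j => x j ^ 2) i (t ^ 2) j := by
    intro j
    rcases eq_or_ne j i with h | h <;> simp [Function.update_apply, h]
  simp only [hf]
  rw [Finset.sum_update_of_mem (Finset.mem_univ i),
    Finset.sum_sdiff_eq_sub (Finset.subset_univ _), Finset.sum_singleton]
  ring

lemma e2_update {k : ℕ} (x : Fin k → ℝ) (i : Fin k) (t : ℝ) :
    e2 (Function.update x i t) = e2 x - x i * (e1 x - x i) + t * (e1 x - x i) := by
  have h1 := sq_e1 (Function.update x i t)
  rw [e1_update, sum_sq_update] at h1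
  have h2 := sq_e1 x
  nlinarith [h1, h2]

lemma hasDerivAt_aux (c A s q D : ℝ) (m : ℕ) (u : ℝ) :
    HasDerivAt (fun t : ℝ => (A * t + q) / D * (c * ((q + t * s) ^ m * Real.exp (-(s + t)))))
      (A / D * (c * ((q + u * s) ^ m * Real.exp (-(s + u))))
        + (A * u + q) / D *
          (c * (((m : ℝ) * (q + u * s) ^ (m - 1) * s) * Real.exp (-(s + u))
            + (q + u * s) ^ m * (Real.exp (-(s + u)) * (-1))))) u := by
  have h1 : HasDerivAt (fun t : ℝ => (A * t + q) / D) (A / D) u := by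
    simpa using (((hasDerivAt_id u).const_mul A).add_const q).div_const D
  have h2 : HasDerivAt (fun t : ℝ => q + t * s) s u := by
    simpa using ((hasDerivAt_id u).mul_const s).const_add q
  have h3 : HasDerivAt (fun t : ℝ => (q + t * s) ^ m)
      ((m : ℝ) * (q + u * s) ^ (m - 1) * s) u := by
    simpa using h2.fun_pow m
  have h4 : HasDerivAt (fun t : ℝ => Real.exp (-(s + t))) (Real.exp (-(s + u)) * (-1)) u := by
    have hn : HasDerivAt (fun t : ℝ => -(s + t)) (-1) u := by
      simpa using ((hasDerivAt_id u).const_add s).fun_neg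
    simpa using hn.exp
  exact h1.mul ((h3.mul h4).const_mul c)

lemma poch_pos (y : ℝ) (hy : 0 < y) (m : ℕ) : 0 < poch y m :=
  Finset.prod_pos fun i _ => by positivity

set_option maxHeartbeats 1000000 in
/-- (WZ 2):  `F_k(m+1;x) - F_k(m;x) = -∑ᵢ ∂/∂xᵢ [ R(xᵢ; x̂ᵢ) F_k(m;x) ]`, where
`R(u; v) = (((k-1)(m+1) + e₁(v)) u + e₂(v)) / ((k-1)(m+1)(2m+k))` and `x̂ᵢ` is `x` with
the `i`-th coordinate deleted, so that `e₁(x̂ᵢ) = e₁(x) - xᵢ` and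
`e₂(x̂ᵢ) = e₂(x) - xᵢ (e₁(x) - xᵢ)`. -/
theorem stmt4 (k m : ℕ) (hk : 2 ≤ k) (x : Fin k → ℝ) (hx : ∀ i, 0 < x i) :
    F k (m + 1) x - F k m x =
      - ∑ i : Fin k,
          deriv (fun t : ℝ =>
            ((((k : ℝ) - 1) * ((m : ℝ) + 1) + (e1 x - x i)) * t +
                (e2 x - x i * (e1 x - x i))) /
              (((k : ℝ) - 1) * ((m : ℝ) + 1) * (2 * (m : ℝ) + k)) *
              F k m (Function.update x i t)) (x i) := by
  have hk2 : (2:ℝ) ≤ (k:ℝ) := by exact_mod_cast hk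
  set A : ℝ := ((k:ℝ) - 1) * ((m:ℝ) + 1) with hA
  set D : ℝ := A * (2 * (m:ℝ) + k) with hD
  set c : ℝ := ((2 * m + k - 1).factorial : ℝ) /
      ((m.factorial : ℝ) * ((2 * m + k - 1).factorial : ℝ) * poch ((k : ℝ) / 2) m) *
    ((k : ℝ) / (2 * ((k : ℝ) - 1))) ^ m with hc
  have hFm : ∀ y : Fin k → ℝ, F k m y = c * (e2 y ^ m * Real.exp (-(e1 y))) := by
    intro y; rw [F, hc]; ring
  set w : ℝ := c * Real.exp (-(e1 x)) / D with hw
  set α : ℝ := w * ((A + e1 x) * e2 x ^ m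
      + (m:ℝ) * e2 x ^ (m-1) * (e2 x) * (e1 x) - (e2 x) * e2 x ^ m) with hα
  set β : ℝ := w * (-(e2 x ^ m) + (m:ℝ) * e2 x ^ (m-1) * (A * e1 x - e2 x)
      - A * e2 x ^ m) with hβ
  set γ : ℝ := w * (-((m:ℝ) * e2 x ^ (m-1) * A)) with hγ
  have key : ∀ i : Fin k,
      deriv (fun t : ℝ =>
        ((((k : ℝ) - 1) * ((m : ℝ) + 1) + (e1 x - x i)) * t +
            (e2 x - x i * (e1 x - x i))) /
          (((k : ℝ) - 1) * ((m : ℝ) + 1) * (2 * (m : ℝ) + k)) *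
          F k m (Function.update x i t)) (x i) = α + β * x i + γ * x i ^ 2 := by
    intro i
    have heq : (fun t : ℝ =>
        ((((k : ℝ) - 1) * ((m : ℝ) + 1) + (e1 x - x i)) * t +
            (e2 x - x i * (e1 x - x i))) /
          (((k : ℝ) - 1) * ((m : ℝ) + 1) * (2 * (m : ℝ) + k)) *
          F k m (Function.update x i t))
        = (fun t : ℝ => ((A + (e1 x - x i)) * t + (e2 x - x i * (e1 x - x i))) / D *
            (c * (((e2 x - x i * (e1 x - x i)) + t * (e1 x - x i)) ^ m *
              Real.exp (-((e1 x - x i) + t))))) := by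
      funext t
      rw [hFm (Function.update x i t), e1_update, e2_update]
    rw [heq, (hasDerivAt_aux c (A + (e1 x - x i)) (e1 x - x i)
        (e2 x - x i * (e1 x - x i)) D m (x i)).deriv]
    have h1 : e1 x - x i + x i = e1 x := by ring
    have h2 : e2 x - x i * (e1 x - x i) + x i * (e1 x - x i) = e2 x := by ring
    rw [h2, h1, hα, hβ, hγ, hw]
    ring
  rw [Finset.sum_congr rfl fun i _ => key i]
  have hsum : ∀ a b g : ℝ, ∑ i : Fin k, (a + b * x i + g * x i ^ 2)
      = (k:ℝ) * a + b * e1 x + g * (e1 x ^ 2 - 2 * e2 x) := by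
    intro a b g
    have hs := sq_e1 x
    rw [Finset.sum_add_distrib, Finset.sum_add_distrib, ← Finset.mul_sum, ← Finset.mul_sum,
      Finset.sum_const, Finset.card_univ, Fintype.card_fin,
      show (∑ i : Fin k, x i) = e1 x from rfl,
      show (∑ i : Fin k, x i ^ 2) = e1 x ^ 2 - 2 * e2 x from by linarith,
      nsmul_eq_mul]
  rw [hsum α β γ]
  have hkR : (k:ℝ) - 1 ≠ 0 := by linarith
  have hk0 : (k:ℝ) ≠ 0 := by linarith
  have hm1 : (m:ℝ) + 1 ≠ 0 := by positivity
  have h2mk : 2 * (m:ℝ) + (k:ℝ) ≠ 0 := by positivity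
  have hA0 : A ≠ 0 := by rw [hA]; exact mul_ne_zero hkR hm1
  have hD0 : D ≠ 0 := by rw [hD]; exact mul_ne_zero hA0 h2mk
  have hpoch : poch ((k:ℝ)/2) m ≠ 0 := ne_of_gt (poch_pos _ (by linarith) m)
  have hfacm : (m.factorial : ℝ) ≠ 0 := Nat.cast_ne_zero.2 m.factorial_ne_zero
  have hk2m0 : (k:ℝ)/2 + (m:ℝ) ≠ 0 := by positivity
  have hpow : (m:ℝ) * (e2 x ^ (m - 1) * e2 x) = (m:ℝ) * e2 x ^ m := by
    cases m with
    | zero => simp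
    | succ n => rw [Nat.add_sub_cancel, ← pow_succ]
  have hpochsucc : poch ((k:ℝ)/2) (m+1) = poch ((k:ℝ)/2) m * ((k:ℝ)/2 + m) :=
    Finset.prod_range_succ _ m
  have hfacsucc : ((m+1).factorial : ℝ) = ((m:ℝ)+1) * (m.factorial : ℝ) := by
    rw [Nat.factorial_succ]; push_cast; ring
  have hcomb : (k:ℝ) * α + β * e1 x + γ * (e1 x ^ 2 - 2 * e2 x)
      = w * (e2 x ^ m * ((k:ℝ) * A - (m:ℝ) * (((k:ℝ) - 1) * e1 x))
          - (k:ℝ) * (e2 x * e2 x ^ m)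
          + ((m:ℝ) * (e2 x ^ (m - 1) * e2 x)) * (((k:ℝ) - 1) * e1 x + 2 * A)) := by
    rw [hα, hβ, hγ]; ring
  rw [hcomb, hpow]
  have hF1 : F k (m+1) x = ((((m+1).factorial : ℝ) * poch ((k:ℝ)/2) (m+1))⁻¹ *
      ((k:ℝ)/(2*((k:ℝ)-1)))^(m+1)) * (e2 x ^ (m+1) * Real.exp (-(e1 x))) := by
    have hN : ((2*(m+1)+k-1).factorial : ℝ) ≠ 0 := Nat.cast_ne_zero.2 (Nat.factorial_ne_zero _)
    have h0 : (((m+1).factorial:ℝ) * ((2*(m+1)+k-1).factorial:ℝ) * poch ((k:ℝ)/2) (m+1))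
        = ((2*(m+1)+k-1).factorial:ℝ) * (((m+1).factorial:ℝ) * poch ((k:ℝ)/2) (m+1)) := by
      ring
    rw [F, h0, div_mul_eq_div_div, div_self hN, one_div]
    ring
  have hc1 : (((m+1).factorial : ℝ) * poch ((k:ℝ)/2) (m+1))⁻¹ *
      ((k:ℝ)/(2*((k:ℝ)-1)))^(m+1)
      = c * ((k:ℝ) / (((k:ℝ)-1) * (((m:ℝ)+1) * (2*(m:ℝ)+k)))) := by
    have hN0 : ((2*m+k-1).factorial : ℝ) ≠ 0 := Nat.cast_ne_zero.2 (Nat.factorial_ne_zero _)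
    have h2k : 2 * ((k:ℝ) - 1) ≠ 0 := mul_ne_zero two_ne_zero hkR
    rw [hc, hpochsucc, hfacsucc, div_pow, div_pow]
    field_simp
    ring
  rw [hF1, hc1, hFm x, hw, hD, hA]
  field_simp
  ring
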